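/- Let R be a Dedekind domain with fraction field K and S a set of maximal ideals of R with finite residue fields. A power series f(x) = Σ_{n∈ℕ^d} a(n) x^n ∈ K[[x_1,…,x_d]] belongs to 𝔏_d(R,S) if and only if a(0) = 1 and there exists a positive integer k such that the family (a(n))_{n∈ℕ^d} has the p^k-Lucas property with respect to S. -/

import Mathlib

/-- The power series `f(x₁^q, …, x_d^q)`. -/
noncomputable def substPow {d : ℕ} {K : Type*} [CommRing K] (q : ℕ)
    (f : MvPowerSeries (Fin d) K) : MvPowerSeries (Fin d) K :=
  fun m => if ∀ i, q ∣ m i then f (Finsupp.mapRange (· / q) (Nat.zero_div _) m) else 0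

/-- `x ∈ K` lies in the localization `R_𝔭 ⊆ K`. -/
def InLoc (R K : Type*) [CommRing R] [CommRing K] [Algebra R K] (𝔭 : Ideal R) (x : K) : Prop :=
  ∃ a b : R, b ∉ 𝔭 ∧ algebraMap R K b * x = algebraMap R K a

/-- `x ∈ K` lies in `𝔭 R_𝔭 ⊆ K`. -/
def InMaxLoc (R K : Type*) [CommRing R] [CommRing K] [Algebra R K] (𝔭 : Ideal R) (x : K) :
    Prop :=
  ∃ a b : R, a ∈ 𝔭 ∧ b ∉ 𝔭 ∧ algebraMap R K b * x = algebraMap R K a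

/-- Membership in `𝔏_d(R,S)`: `f` has constant term `1` and there is a `k ≥ 1`, independent
of `𝔭`, such that for every `𝔭 ∈ S` (with finite residue field of characteristic `p`) all
coefficients of `f` lie in `R_𝔭` and `f(x) ≡ A(x)·f(x^{p^k}) mod 𝔭R_𝔭[[x]]` for a polynomial
`A` with coefficients in `R_𝔭` and `deg_{xᵢ} A ≤ p^k − 1` in each variable. -/
def MemLfrak (R K : Type*) [CommRing R] [Field K] [Algebra R K] (d : ℕ) (S : Set (Ideal R))
    (f : MvPowerSeries (Fin d) K) : Prop :=
  MvPowerSeries.constantCoeff f = 1 ∧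
  ∃ k : ℕ, 0 < k ∧ ∀ 𝔭 ∈ S, ∃ p : ℕ, p.Prime ∧ Finite (R ⧸ 𝔭) ∧ CharP (R ⧸ 𝔭) p ∧
    (∀ m, InLoc R K 𝔭 (MvPowerSeries.coeff m f)) ∧
    ∃ A : MvPolynomial (Fin d) K,
      (∀ m, InLoc R K 𝔭 (MvPolynomial.coeff m A)) ∧
      (∀ i : Fin d, A.degreeOf i ≤ p ^ k - 1) ∧
      ∀ m, InMaxLoc R K 𝔭
        (MvPowerSeries.coeff m (f - (A : MvPowerSeries (Fin d) K) * substPow (p ^ k) f))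

/-- The family `a : ℕ^d → K` has the `p^k`-Lucas property with respect to `S`: for every
`𝔭 ∈ S` (with finite residue field of characteristic `p`), all values lie in `R_𝔭` and
`a(v + p^k·m) ≡ a(v)·a(m) mod 𝔭R_𝔭` for all `v ∈ {0,…,p^k−1}^d` and `m ∈ ℕ^d`. -/
def PkLucas (R K : Type*) [CommRing R] [Field K] [Algebra R K] {d : ℕ} (S : Set (Ideal R))
    (k : ℕ) (a : (Fin d →₀ ℕ) → K) : Prop :=
  ∀ 𝔭 ∈ S, ∃ p : ℕ, p.Prime ∧ Finite (R ⧸ 𝔭) ∧ CharP (R ⧸ 𝔭) p ∧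
    (∀ n, InLoc R K 𝔭 (a n)) ∧
    ∀ v m : Fin d →₀ ℕ, (∀ i, v i ≤ p ^ k - 1) →
      InMaxLoc R K 𝔭 (a (v + p ^ k • m) - a v * a m)


section helpers

variable {R K : Type} [CommRing R] [Field K] [Algebra R K] {𝔭 : Ideal R}

lemma inLoc_zero (h1 : (1:R) ∉ 𝔭) : InLoc R K 𝔭 0 := ⟨0, 1, h1, by simp⟩

lemma inMaxLoc_neg {x : K} (hx : InMaxLoc R K 𝔭 x) : InMaxLoc R K 𝔭 (-x) := by
  obtain ⟨a, b, ha, hb, h⟩ := hx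
  exact ⟨-a, b, 𝔭.neg_mem ha, hb, by rw [map_neg, ← h]; ring⟩

lemma inMaxLoc_add (hp : 𝔭.IsPrime) {x y : K} (hx : InMaxLoc R K 𝔭 x)
    (hy : InMaxLoc R K 𝔭 y) : InMaxLoc R K 𝔭 (x + y) := by
  obtain ⟨a1, b1, ha1, hb1, h1⟩ := hx
  obtain ⟨a2, b2, ha2, hb2, h2⟩ := hy
  refine ⟨b2 * a1 + b1 * a2, b1 * b2, 𝔭.add_mem (𝔭.mul_mem_left _ ha1) (𝔭.mul_mem_left _ ha2),
    fun h => ((hp.mem_or_mem h).elim hb1 hb2), ?_⟩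
  rw [map_mul, map_add, map_mul, map_mul, ← h1, ← h2]; ring

lemma inMaxLoc_mul_inLoc (hp : 𝔭.IsPrime) {x y : K} (hx : InMaxLoc R K 𝔭 x)
    (hy : InLoc R K 𝔭 y) : InMaxLoc R K 𝔭 (x * y) := by
  obtain ⟨a1, b1, ha1, hb1, h1⟩ := hx
  obtain ⟨a2, b2, hb2, h2⟩ := hy
  refine ⟨a1 * a2, b1 * b2, 𝔭.mul_mem_right _ ha1,
    fun h => ((hp.mem_or_mem h).elim hb1 hb2), ?_⟩
  rw [map_mul, map_mul, ← h1, ← h2]; ring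

end helpers

section key

variable {d : ℕ} {K : Type} [CommRing K]

lemma coeff_substPow (q : ℕ) (f : MvPowerSeries (Fin d) K) (m : Fin d →₀ ℕ) :
    MvPowerSeries.coeff m (substPow q f) =
      if ∀ i, q ∣ m i then
        MvPowerSeries.coeff (Finsupp.mapRange (· / q) (Nat.zero_div _) m) f else 0 := by
  rfl

lemma coeff_mul_substPow {q : ℕ} (hq : 0 < q)
    (A : MvPolynomial (Fin d) K) (hA : ∀ i, A.degreeOf i ≤ q - 1)
    (f : MvPowerSeries (Fin d) K) (n : Fin d →₀ ℕ) :
    MvPowerSeries.coeff n ((A : MvPowerSeries (Fin d) K) * substPow q f) =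
      A.coeff (Finsupp.mapRange (· % q) (Nat.zero_mod _) n) *
        MvPowerSeries.coeff (Finsupp.mapRange (· / q) (Nat.zero_div _) n) f := by
  classical
  set nm : Fin d →₀ ℕ := Finsupp.mapRange (· % q) (Nat.zero_mod _) n with hnm
  set nd : Fin d →₀ ℕ := Finsupp.mapRange (· / q) (Nat.zero_div _) n with hnd
  rw [MvPowerSeries.coeff_mul]
  have hmem : (nm, q • nd) ∈ Finset.HasAntidiagonal.antidiagonal n := by
    rw [Finset.HasAntidiagonal.mem_antidiagonal]
    ext i
    simp only [Finsupp.add_apply, Finsupp.smul_apply, smul_eq_mul, hnm, hnd,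
      Finsupp.mapRange_apply]
    exact Nat.mod_add_div (n i) q
  rw [Finset.sum_eq_single_of_mem (nm, q • nd) hmem]
  · have hdvd : ∀ i, q ∣ (q • nd) i := fun i => ⟨nd i, by simp [mul_comm]⟩
    rw [MvPolynomial.coeff_coe, coeff_substPow, if_pos hdvd]
    have heq : Finsupp.mapRange (· / q) (Nat.zero_div _) (q • nd) = nd := by
      ext i
      simp only [Finsupp.mapRange_apply, Finsupp.smul_apply, smul_eq_mul]
      exact Nat.mul_div_cancel_left _ hq
    rw [heq]
  · rintro ⟨u, w⟩ hb hne
    rw [Finset.HasAntidiagonal.mem_antidiagonal] at hb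
    by_contra h
    have hu : MvPolynomial.coeff u A ≠ 0 := by
      intro h0; apply h; rw [MvPolynomial.coeff_coe, h0, zero_mul]
    have hw : ∀ i, q ∣ w i := by
      by_contra h0
      apply h
      rw [coeff_substPow, if_neg h0, mul_zero]
    have hult : ∀ i, u i < q := fun i =>
      lt_of_le_of_lt (MvPolynomial.degreeOf_le_iff.mp (hA i)
        u (MvPolynomial.mem_support_iff.mpr hu)) (Nat.sub_lt hq one_pos)
    apply hne
    have hu_eq : u = nm := by
      ext i
      obtain ⟨c, hc⟩ := hw i
      simp only [hnm, Finsupp.mapRange_apply, ← hb, Finsupp.add_apply, hc]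
      rw [Nat.add_mul_mod_self_left, Nat.mod_eq_of_lt (hult i)]
    have hw_eq : w = q • nd := by
      ext i
      obtain ⟨c, hc⟩ := hw i
      simp only [hnd, Finsupp.smul_apply, smul_eq_mul, Finsupp.mapRange_apply, ← hb,
        Finsupp.add_apply, hc]
      rw [Nat.add_mul_div_left _ _ hq, Nat.div_eq_of_lt (hult i), zero_add]
    rw [hu_eq, hw_eq]

end key

/-- A power series `f = ∑ a(n) xⁿ ∈ K[[x₁,…,x_d]]` belongs to `𝔏_d(R,S)` if
and only if `a(0) = 1` and there is a positive integer `k` such that the coefficient family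
`(a(n))` has the `p^k`-Lucas property with respect to `S`. -/
theorem memLfrak_iff_pkLucas
    {R K : Type} [CommRing R] [IsDedekindDomain R] [Field K] [Algebra R K] [IsFractionRing R K]
    {d : ℕ} (S : Set (Ideal R)) (hSmax : ∀ 𝔭 ∈ S, Ideal.IsMaximal 𝔭)
    (hSfin : ∀ 𝔭 ∈ S, Finite (R ⧸ 𝔭)) (f : MvPowerSeries (Fin d) K) :
    MemLfrak R K d S f ↔
      (MvPowerSeries.constantCoeff f = 1 ∧
        ∃ k : ℕ, 0 < k ∧ PkLucas R K S k (fun m => MvPowerSeries.coeff m f)) := by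
  constructor
  · rintro ⟨hc, k, hk, h⟩
    refine ⟨hc, k, hk, ?_⟩
    intro 𝔭 h𝔭
    obtain ⟨p, hp, hfin, hchar, hcoef, A, hAloc, hAdeg, hcong⟩ := h 𝔭 h𝔭
    have hprime := (hSmax 𝔭 h𝔭).isPrime
    refine ⟨p, hp, hfin, hchar, hcoef, ?_⟩
    intro v m hv
    set q := p ^ k with hqdef
    have hq : 0 < q := pow_pos hp.pos k
    have hvlt : ∀ i, v i < q := fun i => lt_of_le_of_lt (hv i) (Nat.sub_lt hq one_pos)
    have key : ∀ n : Fin d →₀ ℕ,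
        MvPowerSeries.coeff n (f - (A : MvPowerSeries (Fin d) K) * substPow q f) =
          MvPowerSeries.coeff n f -
            A.coeff (Finsupp.mapRange (· % q) (Nat.zero_mod _) n) *
              MvPowerSeries.coeff (Finsupp.mapRange (· / q) (Nat.zero_div _) n) f := by
      intro n
      rw [map_sub, coeff_mul_substPow hq A hAdeg]
    -- specialize at v + q • m
    have h1 := hcong (v + q • m)
    rw [key] at h1
    have hmm : Finsupp.mapRange (· % q) (Nat.zero_mod _) (v + q • m) = v := by
      ext i
      simp only [Finsupp.mapRange_apply, Finsupp.add_apply, Finsupp.smul_apply, smul_eq_mul]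
      rw [Nat.add_mul_mod_self_left, Nat.mod_eq_of_lt (hvlt i)]
    have hdd : Finsupp.mapRange (· / q) (Nat.zero_div _) (v + q • m) = m := by
      ext i
      simp only [Finsupp.mapRange_apply, Finsupp.add_apply, Finsupp.smul_apply, smul_eq_mul]
      rw [Nat.add_mul_div_left _ _ hq, Nat.div_eq_of_lt (hvlt i), zero_add]
    rw [hmm, hdd] at h1
    -- specialize at v
    have h2 := hcong v
    rw [key] at h2
    have hmv : Finsupp.mapRange (· % q) (Nat.zero_mod _) v = v := by
      ext i
      simp only [Finsupp.mapRange_apply]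
      exact Nat.mod_eq_of_lt (hvlt i)
    have hdv : Finsupp.mapRange (· / q) (Nat.zero_div _) v = 0 := by
      ext i
      simp only [Finsupp.mapRange_apply, Finsupp.coe_zero, Pi.zero_apply]
      exact Nat.div_eq_of_lt (hvlt i)
    rw [hmv, hdv, MvPowerSeries.coeff_zero_eq_constantCoeff_apply, hc, mul_one] at h2
    have e : MvPowerSeries.coeff (v + q • m) f -
        MvPowerSeries.coeff v f * MvPowerSeries.coeff m f =
        (MvPowerSeries.coeff (v + q • m) f -
          A.coeff v * MvPowerSeries.coeff m f) +
        (-((MvPowerSeries.coeff v f - A.coeff v) * MvPowerSeries.coeff m f)) := by ring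
    simpa only [e] using
      inMaxLoc_add hprime h1 (inMaxLoc_neg (inMaxLoc_mul_inLoc hprime h2 (hcoef m)))
  · rintro ⟨hc, k, hk, hluc⟩
    refine ⟨hc, k, hk, ?_⟩
    intro 𝔭 h𝔭
    obtain ⟨p, hp, hfin, hchar, hcoef, hLuc⟩ := hluc 𝔭 h𝔭
    have hprime := (hSmax 𝔭 h𝔭).isPrime
    have h1 : (1:R) ∉ 𝔭 := (Ideal.ne_top_iff_one 𝔭).mp hprime.ne_top
    refine ⟨p, hp, hfin, hchar, hcoef, ?_⟩
    set q := p ^ k with hqdef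
    have hq : 0 < q := pow_pos hp.pos k
    classical
    set c : Fin d →₀ ℕ := Finsupp.equivFunOnFinite.symm (fun _ => q - 1) with hcdef
    have hc_apply : ∀ i, c i = q - 1 := fun i => rfl
    set A : MvPolynomial (Fin d) K :=
      ∑ v ∈ Finset.Iic c, MvPolynomial.monomial v (MvPowerSeries.coeff v f) with hAdef
    have hcoeffA : ∀ m, A.coeff m = if m ≤ c then MvPowerSeries.coeff m f else 0 := by
      intro m
      rw [hAdef, MvPolynomial.coeff_sum]
      simp [MvPolynomial.coeff_monomial, Finset.sum_ite_eq, Finset.mem_Iic]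
    have hAdeg : ∀ i : Fin d, A.degreeOf i ≤ q - 1 := by
      intro i
      rw [MvPolynomial.degreeOf_le_iff]
      intro m hm
      have hmne := MvPolynomial.mem_support_iff.mp hm
      rw [hcoeffA] at hmne
      by_cases hmc : m ≤ c
      · exact le_trans (Finsupp.le_def.mp hmc i) (le_of_eq (hc_apply i))
      · exact absurd (if_neg hmc) hmne
    refine ⟨A, ?_, hAdeg, ?_⟩
    · intro m
      rw [hcoeffA]
      split
      · exact hcoef m
      · exact inLoc_zero h1
    · intro n
      rw [map_sub, coeff_mul_substPow hq A hAdeg]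
      set nm : Fin d →₀ ℕ := Finsupp.mapRange (· % q) (Nat.zero_mod _) n with hnm
      set nd : Fin d →₀ ℕ := Finsupp.mapRange (· / q) (Nat.zero_div _) n with hnd
      have hnmle : ∀ i, nm i ≤ q - 1 := fun i =>
        Nat.le_sub_one_of_lt (Nat.mod_lt _ hq)
      rw [hcoeffA nm, if_pos (Finsupp.le_def.mpr fun i => (hc_apply i) ▸ hnmle i)]
      have hdecomp : n = nm + q • nd := by
        ext i
        simp only [Finsupp.add_apply, Finsupp.smul_apply, smul_eq_mul, hnm, hnd,
          Finsupp.mapRange_apply]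
        exact (Nat.mod_add_div (n i) q).symm
      have hl := hLuc nm nd hnmle
      rw [← hdecomp] at hl
      simpa using hl
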